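/- Let n ≥ 1, let H be a real symmetric n×n matrix, g ∈ ℝⁿ with g ≠ 0, σ > 0, κ_C > 0, and let v ∈ ℝⁿ satisfy ‖v‖ = 1, ⟨g,v⟩ ≤ 0 and ⟨v,Hv⟩ ≤ −κ_C·√(σ‖g‖). Set s := (κ_C·√(σ‖g‖)/σ)·v. Then −(⟨g,s⟩ + (1/2)⟨s,Hs⟩) ≥ (1/2)·σ·‖s‖³. -/

import Mathlib

open RealInnerProductSpace

/-- Lemma 2.3 of the paper, case of the negative-curvature step `s^{curv}`:
lower bound on the decrease of the local quadratic model. -/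
theorem quadratic_decrease_curv_step {n : ℕ} (hn : 1 ≤ n)
    (H : Matrix (Fin n) (Fin n) ℝ) (hH : H.IsHermitian)
    (g v : EuclideanSpace ℝ (Fin n)) (hg : g ≠ 0)
    (σ κC : ℝ) (hσ : 0 < σ) (hκC : 0 < κC)
    (hv : ‖v‖ = 1) (hgv : ⟪g, v⟫ ≤ 0)
    (hcurv : ⟪v, Matrix.toEuclideanLin H v⟫ ≤ -κC * Real.sqrt (σ * ‖g‖))
    (s : EuclideanSpace ℝ (Fin n)) (hs : s = (κC * Real.sqrt (σ * ‖g‖) / σ) • v) :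
    -(⟪g, s⟫ + (1 / 2) * ⟪s, Matrix.toEuclideanLin H s⟫)
      ≥ (1 / 2) * σ * ‖s‖ ^ 3 := by
  have hgnorm : (0:ℝ) < ‖g‖ := norm_pos_iff.mpr hg
  have hsq : 0 < Real.sqrt (σ * ‖g‖) := Real.sqrt_pos.mpr (by positivity)
  set α : ℝ := κC * Real.sqrt (σ * ‖g‖) / σ with hα
  have hαpos : 0 < α := by positivity
  have hns : ‖s‖ = α := by
    rw [hs, norm_smul, hv, mul_one, Real.norm_eq_abs, abs_of_pos hαpos]
  have h1 : ⟪g, s⟫ = α * ⟪g, v⟫ := by rw [hs, real_inner_smul_right]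
  have h2 : ⟪s, Matrix.toEuclideanLin H s⟫
      = α * (α * ⟪v, Matrix.toEuclideanLin H v⟫) := by
    rw [hs, map_smul, real_inner_smul_left, real_inner_smul_right]
  have hσα : σ * α = κC * Real.sqrt (σ * ‖g‖) := by
    rw [hα]; field_simp [hσ.ne']
  have hquad : ⟪v, Matrix.toEuclideanLin H v⟫ ≤ -(σ * α) := by
    rw [hσα]; linarith
  have hgs : ⟪g, s⟫ ≤ 0 := by
    rw [h1]; exact mul_nonpos_of_nonneg_of_nonpos hαpos.le hgv
  have h3 : ⟪s, Matrix.toEuclideanLin H s⟫ ≤ -(σ * α^3) := by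
    rw [h2]
    nlinarith [sq_nonneg α, hαpos.le]
  rw [hns]
  nlinarith
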